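/- Let k ≥ n ≥ 3 and j ≥ 1. If the jth letter of S_∞ is a_i (for some 1 ≤ i ≤ n), then q(j+1) - q(j) = F_{n,k+i}. -/

import Mathlib

/-- `L` encodes an `n`-decomposition of `x`: indices at least `n`, consecutive
gaps at least `n`, summing (via `F`) to `x`. -/
def IsDecompOf (n : ℕ) (F : ℕ → ℕ) (L : List ℕ) (x : ℕ) : Prop :=
  (∀ c ∈ L, n ≤ c) ∧ L.Chain' (fun a b => a + n ≤ b) ∧ (L.map F).sum = x

/-- `x` is a positive integer whose `n`-decomposition has `F k` as its
smallest summand (i.e. `k` is the smallest index used). -/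
def MemXnk (n k : ℕ) (F : ℕ → ℕ) (x : ℕ) : Prop :=
  0 < x ∧ ∃ L : List ℕ, IsDecompOf n F L x ∧ k ∈ L ∧ ∀ c ∈ L, k ≤ c

def gm (n : ℕ) (F : ℕ → ℕ) (x : ℕ) : ℕ := Nat.findGreatest (fun m => F m ≤ x) (x + n)

def dec (n : ℕ) (F : ℕ → ℕ) : ℕ → List ℕ
  | 0 => []
  | (x+1) =>
    if _h : 0 < F (gm n F (x+1)) then
      dec n F (x + 1 - F (gm n F (x+1))) ++ [gm n F (x+1)]
    else []
  decreasing_by omega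

section
variable {n k : ℕ} {F : ℕ → ℕ}

lemma Fpos (hn : 3 ≤ n) (hF1 : ∀ i, 1 ≤ i → i ≤ n → F i = 1)
    (hFrec : ∀ m, n ≤ m → F (m + 1) = F m + F (m + 1 - n)) :
    ∀ m, 1 ≤ m → 1 ≤ F m := by
  intro m
  induction m using Nat.strong_induction_on with
  | _ m ih =>
    intro hm
    rcases le_or_gt m n with h | h
    · rw [hF1 m hm h]
    · obtain ⟨t, rfl⟩ : ∃ t, m = t + 1 := ⟨m - 1, by omega⟩
      rw [hFrec t (by omega)]
      have := ih t (by omega) (by omega)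
      omega

lemma Fmono (hn : 3 ≤ n) (hF1 : ∀ i, 1 ≤ i → i ≤ n → F i = 1)
    (hFrec : ∀ m, n ≤ m → F (m + 1) = F m + F (m + 1 - n)) :
    ∀ a b, 1 ≤ a → a ≤ b → F a ≤ F b := by
  intro a b ha hab
  induction b, hab using Nat.le_induction with
  | base => exact le_refl _
  | succ b hb ih =>
    rcases le_or_gt n b with h | h
    · rw [hFrec b h]; omega
    · rw [hF1 a ha (by omega), hF1 (b+1) (by omega) (by omega)]

lemma Flin (hn : 3 ≤ n) (hF1 : ∀ i, 1 ≤ i → i ≤ n → F i = 1)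
    (hFrec : ∀ m, n ≤ m → F (m + 1) = F m + F (m + 1 - n)) :
    ∀ t, t ≤ n → F (n + t) = t + 1 := by
  intro t
  induction t with
  | zero => intro _; exact hF1 n (by omega) le_rfl
  | succ t ih =>
    intro ht
    have h1 : F (n + t + 1) = F (n + t) + F (n + t + 1 - n) := hFrec (n + t) (by omega)
    have h2 : n + t + 1 - n = t + 1 := by omega
    rw [show n + (t+1) = n + t + 1 by omega, h1, h2, ih (by omega), hF1 (t+1) (by omega) ht]

lemma Fgrow (hn : 3 ≤ n) (hF1 : ∀ i, 1 ≤ i → i ≤ n → F i = 1)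
    (hFrec : ∀ m, n ≤ m → F (m + 1) = F m + F (m + 1 - n)) :
    ∀ t, t + 1 ≤ F (n + t) := by
  intro t
  induction t with
  | zero => show 0 + 1 ≤ F n; rw [hF1 n (by omega) le_rfl]
  | succ t ih =>
    have h1 : F (n + t + 1) = F (n + t) + F (n + t + 1 - n) := hFrec (n + t) (by omega)
    have h2 : n + t + 1 - n = t + 1 := by omega
    have h3 := Fpos hn hF1 hFrec (t+1) (by omega)
    rw [show n + (t+1) = n + t + 1 by omega, h1, h2]
    omega

lemma gm_ge (hn : 3 ≤ n) (hF1 : ∀ i, 1 ≤ i → i ≤ n → F i = 1)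
    {x : ℕ} (hx : 1 ≤ x) : n ≤ gm n F x :=
  Nat.le_findGreatest (by omega) (by rw [hF1 n (by omega) le_rfl]; exact hx)

lemma gm_le (hn : 3 ≤ n) (hF1 : ∀ i, 1 ≤ i → i ≤ n → F i = 1)
    {x : ℕ} (hx : 1 ≤ x) : F (gm n F x) ≤ x :=
  Nat.findGreatest_spec (P := fun m => F m ≤ x) (n := x + n) (m := n) (by omega)
    (by show F n ≤ x; rw [hF1 n (by omega) le_rfl]; exact hx)

lemma gm_lt (hn : 3 ≤ n) (hF1 : ∀ i, 1 ≤ i → i ≤ n → F i = 1)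
    (hFrec : ∀ m, n ≤ m → F (m + 1) = F m + F (m + 1 - n))
    {x : ℕ} (hx : 1 ≤ x) : x < F (gm n F x + 1) := by
  have hle : gm n F x ≤ x + n := Nat.findGreatest_le _
  rcases eq_or_lt_of_le hle with heq | hlt
  · exfalso
    have h1 : F (gm n F x) ≤ x := gm_le hn hF1 hx
    have h2 := Fgrow hn hF1 hFrec x
    rw [heq, show x + n = n + x by omega] at h1
    omega
  · by_contra hcon
    exact Nat.findGreatest_is_greatest (P := fun m => F m ≤ x) (n := x + n)
      (k := gm n F x + 1) (Nat.lt_succ_self _) (by omega) (by omega)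
lemma dec_eq (hn : 3 ≤ n) (hF1 : ∀ i, 1 ≤ i → i ≤ n → F i = 1)
    (hFrec : ∀ m, n ≤ m → F (m + 1) = F m + F (m + 1 - n))
    {x : ℕ} (hx : 1 ≤ x) :
    dec n F x = dec n F (x - F (gm n F x)) ++ [gm n F x] := by
  obtain ⟨y, rfl⟩ : ∃ y, x = y + 1 := ⟨x - 1, by omega⟩
  have hmn : n ≤ gm n F (y+1) := gm_ge hn hF1 hx
  have hpos : 0 < F (gm n F (y+1)) := Fpos hn hF1 hFrec _ (by omega)
  rw [dec]
  simp [hpos]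

lemma dec_spec (hn : 3 ≤ n) (hF1 : ∀ i, 1 ≤ i → i ≤ n → F i = 1)
    (hFrec : ∀ m, n ≤ m → F (m + 1) = F m + F (m + 1 - n)) :
    ∀ x, IsDecompOf n F (dec n F x) x ∧ (1 ≤ x → (dec n F x).getLast? = some (gm n F x)) := by
  intro x
  induction x using Nat.strong_induction_on with
  | _ x ih =>
    rcases Nat.eq_zero_or_pos x with rfl | hx
    · exact ⟨⟨by simp [dec], by simp [dec]; exact List.isChain_nil, by simp [dec]⟩, by omega⟩
    · have hmn : n ≤ gm n F x := gm_ge hn hF1 hx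
      have hFm_le : F (gm n F x) ≤ x := gm_le hn hF1 hx
      have hFm_pos : 1 ≤ F (gm n F x) := Fpos hn hF1 hFrec _ (by omega)
      have hlt : x < F (gm n F x + 1) := gm_lt hn hF1 hFrec hx
      have hrec : F (gm n F x + 1) = F (gm n F x) + F (gm n F x + 1 - n) := hFrec _ hmn
      obtain ⟨⟨helem, hchain, hsum⟩, hlast⟩ := ih (x - F (gm n F x)) (by omega)
      have hdec : dec n F x = dec n F (x - F (gm n F x)) ++ [gm n F x] := dec_eq hn hF1 hFrec hx
      have hlastbound : ∀ a ∈ (dec n F (x - F (gm n F x))).getLast?, a + n ≤ gm n F x := by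
        intro a ha
        rcases Nat.eq_zero_or_pos (x - F (gm n F x)) with h0 | h1
        · rw [h0] at ha; simp [dec] at ha
        · rw [hlast h1] at ha
          have ha' : a = gm n F (x - F (gm n F x)) := (by simpa using ha : _ = a).symm
          have h2 : F a ≤ x - F (gm n F x) := ha' ▸ gm_le hn hF1 h1
          by_contra hcon
          have h4 : gm n F x + 1 - n ≤ a := by omega
          have h5 := Fmono hn hF1 hFrec (gm n F x + 1 - n) a (by omega) h4
          omega
      refine ⟨⟨?_, ?_, ?_⟩, ?_⟩
      · intro c hc; rw [hdec] at hc
        rcases List.mem_append.1 hc with h | h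
        · exact helem c h
        · simp at h; omega
      · rw [hdec]; simp only [List.Chain']; rw [List.isChain_append]
        refine ⟨hchain, List.isChain_singleton _, ?_⟩
        intro a ha b hb
        simp at hb; subst hb
        exact hlastbound a ha
      · rw [hdec]
        simp only [List.map_append, List.sum_append, List.map_cons, List.map_nil,
          List.sum_cons, List.sum_nil]
        omega
      · intro _
        rw [hdec, List.getLast?_append]
        simp
lemma decomp_bound (hn : 3 ≤ n) (hF1 : ∀ i, 1 ≤ i → i ≤ n → F i = 1)
    (hFrec : ∀ m, n ≤ m → F (m + 1) = F m + F (m + 1 - n)) :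
    ∀ L : List ℕ, ∀ x M, IsDecompOf n F L x → L.getLast? = some M →
      F M ≤ x ∧ x < F (M + 1) := by
  intro L
  induction L using List.reverseRecOn with
  | nil => intro x M _ hM; simp at hM
  | append_singleton L a ih =>
    intro x M h hM
    rw [List.getLast?_concat] at hM
    obtain rfl : a = M := by simpa using hM
    obtain ⟨helem, hchain, hsum⟩ := h
    have han : n ≤ a := helem a (by simp)
    have hrec : F (a + 1) = F a + F (a + 1 - n) := hFrec a han
    have hx : x = (L.map F).sum + F a := by
      rw [← hsum]; simp
    simp only [List.Chain'] at hchain; rw [List.isChain_append] at hchain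
    obtain ⟨hch1, _, hch3⟩ := hchain
    rcases List.eq_nil_or_concat L with rfl | ⟨L₀, M₀, rfl⟩
    · have h1F : 1 ≤ F (a + 1 - n) := Fpos hn hF1 hFrec _ (by omega)
      simp at hx
      omega
    · simp only [List.concat_eq_append] at *
      have hM₀ : (L₀ ++ [M₀]).getLast? = some M₀ := List.getLast?_concat
      have hrel : M₀ + n ≤ a := hch3 M₀ (by rw [hM₀]; rfl) a (by rfl)
      have hIH := ih ((L₀ ++ [M₀]).map F).sum M₀
        ⟨fun c hc => helem c (by simp at hc ⊢; tauto), hch1, rfl⟩ hM₀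
      have hmono : F (M₀ + 1) ≤ F (a + 1 - n) :=
        Fmono hn hF1 hFrec (M₀ + 1) (a + 1 - n) (by omega) (by omega)
      omega

lemma dec_unique (hn : 3 ≤ n) (hF1 : ∀ i, 1 ≤ i → i ≤ n → F i = 1)
    (hFrec : ∀ m, n ≤ m → F (m + 1) = F m + F (m + 1 - n)) :
    ∀ x L, IsDecompOf n F L x → L = dec n F x := by
  intro x
  induction x using Nat.strong_induction_on with
  | _ x ih =>
    intro L h
    obtain ⟨helem, hchain, hsum⟩ := h
    rcases Nat.eq_zero_or_pos x with rfl | hx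
    · rcases List.eq_nil_or_concat L with rfl | ⟨L₀, M, rfl⟩
      · simp [dec]
      · exfalso
        have hMn : n ≤ M := helem M (by simp)
        have h1 : 1 ≤ F M := Fpos hn hF1 hFrec M (by omega)
        have h2 : ((L₀ ++ [M]).map F).sum = (L₀.map F).sum + F M := by simp
        simp only [List.concat_eq_append] at hsum
        omega
    · rcases List.eq_nil_or_concat L with rfl | ⟨L₀, M, rfl⟩
      · simp at hsum; omega
      · simp only [List.concat_eq_append] at *
        have hMn : n ≤ M := helem M (by simp)
        have hb := decomp_bound hn hF1 hFrec (L₀ ++ [M]) x M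
          ⟨helem, hchain, hsum⟩ (List.getLast?_concat)
        have hgn : n ≤ gm n F x := gm_ge hn hF1 hx
        have hgle : F (gm n F x) ≤ x := gm_le hn hF1 hx
        have hglt : x < F (gm n F x + 1) := gm_lt hn hF1 hFrec hx
        obtain rfl : M = gm n F x := by
          by_contra hne
          rcases Nat.lt_or_ge M (gm n F x) with hlt | hge
          · have := Fmono hn hF1 hFrec (M + 1) (gm n F x) (by omega) (by omega)
            omega
          · have := Fmono hn hF1 hFrec (gm n F x + 1) M (by omega) (by omega)
            omega
        simp only [List.Chain'] at hchain; rw [List.isChain_append] at hchain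
        have hsum' : (L₀.map F).sum = x - F (gm n F x) := by
          have : ((L₀ ++ [gm n F x]).map F).sum = (L₀.map F).sum + F (gm n F x) := by simp
          omega
        have hL₀ : L₀ = dec n F (x - F (gm n F x)) := by
          refine ih (x - F (gm n F x))
            (by have := Fpos hn hF1 hFrec (gm n F x) (by omega); omega) L₀
            ⟨fun c hc => helem c (by simp [hc]), hchain.1, hsum'⟩
        rw [hL₀, ← dec_eq hn hF1 hFrec hx]
variable {S : ℕ → List ℕ} {W : ℕ → ℕ}

lemma S_len (hn : 3 ≤ n) (hF1 : ∀ i, 1 ≤ i → i ≤ n → F i = 1)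
    (hFrec : ∀ m, n ≤ m → F (m + 1) = F m + F (m + 1 - n))
    (hS1 : ∀ i, 1 ≤ i → i ≤ n → S i = [i])
    (hSrec : ∀ m, n ≤ m → S (m + 1) = S m ++ S (m + 1 - n)) :
    ∀ t, 1 ≤ t → (S t).length = F t := by
  intro t
  induction t using Nat.strong_induction_on with
  | _ t ih =>
    intro ht
    rcases le_or_gt t n with h | h
    · rw [hS1 t ht h, hF1 t ht h]; rfl
    · obtain ⟨s, rfl⟩ : ∃ s, t = s + 1 := ⟨t - 1, by omega⟩
      rw [hSrec s (by omega), hFrec s (by omega), List.length_append,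
        ih s (by omega) (by omega), ih (s + 1 - n) (by omega) (by omega)]

lemma lastLetter (hn : 3 ≤ n) (hF1 : ∀ i, 1 ≤ i → i ≤ n → F i = 1)
    (hFrec : ∀ m, n ≤ m → F (m + 1) = F m + F (m + 1 - n))
    (hS1 : ∀ i, 1 ≤ i → i ≤ n → S i = [i])
    (hSrec : ∀ m, n ≤ m → S (m + 1) = S m ++ S (m + 1 - n)) :
    ∀ t, 1 ≤ t → (S t).getLast? = some ((t - 1) % n + 1) := by
  intro t
  induction t using Nat.strong_induction_on with
  | _ t ih =>
    intro ht
    rcases le_or_gt t n with h | h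
    · rw [hS1 t ht h]
      simp [Nat.mod_eq_of_lt (show t - 1 < n by omega)]
      omega
    · obtain ⟨s, rfl⟩ : ∃ s, t = s + 1 := ⟨t - 1, by omega⟩
      rw [hSrec s (by omega), List.getLast?_append,
        ih (s + 1 - n) (by omega) (by omega)]
      have : (s + 1 - n - 1) % n = (s + 1 - 1) % n := by
        have h1 : (s : ℕ) % n = (s - n) % n := Nat.mod_eq_sub_mod (by omega)
        have h2 : s + 1 - n - 1 = s - n := by omega
        have h3 : s + 1 - 1 = s := by omega
        rw [h2, h3, h1]
      rw [this]
      rfl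

lemma W_prefix (hn : 3 ≤ n) (hF1 : ∀ i, 1 ≤ i → i ≤ n → F i = 1)
    (hFrec : ∀ m, n ≤ m → F (m + 1) = F m + F (m + 1 - n))
    (hS1 : ∀ i, 1 ≤ i → i ≤ n → S i = [i])
    (hSrec : ∀ m, n ≤ m → S (m + 1) = S m ++ S (m + 1 - n))
    (hW : ∀ m, n ≤ m → S m = (List.range (S m).length).map W) :
    ∀ t, n ≤ t → ∀ i, i < F t → (S t)[i]? = some (W i) := by
  intro t ht i hi
  have hlen : (S t).length = F t := S_len hn hF1 hFrec hS1 hSrec t (by omega)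
  conv_lhs => rw [hW t ht]
  rw [List.getElem?_map, List.getElem?_range (by rw [hlen]; exact hi)]
  rfl
lemma letter_eq (hn : 3 ≤ n) (hF1 : ∀ i, 1 ≤ i → i ≤ n → F i = 1)
    (hFrec : ∀ m, n ≤ m → F (m + 1) = F m + F (m + 1 - n))
    (hS1 : ∀ i, 1 ≤ i → i ≤ n → S i = [i])
    (hSrec : ∀ m, n ≤ m → S (m + 1) = S m ++ S (m + 1 - n))
    (hW : ∀ m, n ≤ m → S m = (List.range (S m).length).map W) :
    ∀ j, 1 ≤ j → ∀ c L', dec n F j = c :: L' → W (j - 1) = (c - 1) % n + 1 := by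
  intro j
  induction j using Nat.strong_induction_on with
  | _ j ih =>
    intro hj c L' hdecj
    have hmn : n ≤ gm n F j := gm_ge hn hF1 hj
    have hFm_le : F (gm n F j) ≤ j := gm_le hn hF1 hj
    have hFm_pos : 1 ≤ F (gm n F j) := Fpos hn hF1 hFrec _ (by omega)
    have hlt : j < F (gm n F j + 1) := gm_lt hn hF1 hFrec hj
    have hrec : F (gm n F j + 1) = F (gm n F j) + F (gm n F j + 1 - n) := hFrec _ hmn
    have hdec : dec n F j = dec n F (j - F (gm n F j)) ++ [gm n F j] :=
      dec_eq hn hF1 hFrec hj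
    rcases Nat.eq_zero_or_pos (j - F (gm n F j)) with h0 | h1
    · -- j = F (gm n F j), dec j = [gm n F j]
      have hj_eq : j = F (gm n F j) := by omega
      rw [h0] at hdec
      have hdec' : dec n F j = [gm n F j] := by
        rw [hdec, show dec n F 0 = [] from by simp [dec]]; rfl
      rw [hdec'] at hdecj
      injection hdecj.symm with hc1 hc2
      subst hc1; subst hc2
      have hlen : (S (gm n F j)).length = F (gm n F j) :=
        S_len hn hF1 hFrec hS1 hSrec _ (by omega)
      have h1 : (S (gm n F j))[j - 1]? = some (W (j - 1)) :=
        W_prefix hn hF1 hFrec hS1 hSrec hW _ hmn _ (by omega)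
      have h2 : (S (gm n F j)).getLast? = some ((gm n F j - 1) % n + 1) :=
        lastLetter hn hF1 hFrec hS1 hSrec _ (by omega)
      rw [List.getLast?_eq_getElem?, hlen,
        show F (gm n F j) - 1 = j - 1 by omega, h1] at h2
      exact Option.some.inj h2
    · -- second case
      obtain ⟨c', L'', hdecj'⟩ : ∃ c' L'', dec n F (j - F (gm n F j)) = c' :: L'' := by
        have := (dec_spec hn hF1 hFrec (j - F (gm n F j))).2 h1
        cases hdd : dec n F (j - F (gm n F j)) with
        | nil => rw [hdd] at this; simp at this
        | cons a l => exact ⟨a, l, rfl⟩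
      have hcc : c' = c := by
        rw [hdec, hdecj'] at hdecj
        injection hdecj.symm with hc1 _
        exact hc1.symm
      subst hcc
      have hm1n : n ≤ gm n F (j - F (gm n F j)) := gm_ge hn hF1 h1
      have hm1le : F (gm n F (j - F (gm n F j))) ≤ j - F (gm n F j) := gm_le hn hF1 h1
      have hm1 : gm n F (j - F (gm n F j)) + n ≤ gm n F j := by
        by_contra hcon
        have := Fmono hn hF1 hFrec (gm n F j + 1 - n) (gm n F (j - F (gm n F j)))
          (by omega) (by omega)
        omega
      have h2n : 2 * n ≤ gm n F j := by omega
      have hjlt : j < F (gm n F j + 1) := hlt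
      have hlenm : (S (gm n F j)).length = F (gm n F j) :=
        S_len hn hF1 hFrec hS1 hSrec _ (by omega)
      have hA : (S (gm n F j + 1))[j - 1]? = some (W (j - 1)) :=
        W_prefix hn hF1 hFrec hS1 hSrec hW _ (by omega) _ (by omega)
      rw [hSrec _ hmn, List.getElem?_append_right (by omega)] at hA
      have hB : (S (gm n F j + 1 - n))[j - 1 - (S (gm n F j)).length]? =
          some (W (j - F (gm n F j) - 1)) := by
        rw [hlenm, show j - 1 - F (gm n F j) = j - F (gm n F j) - 1 by omega]
        exact W_prefix hn hF1 hFrec hS1 hSrec hW _ (by omega) _ (by omega)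
      rw [hB] at hA
      have hIH := ih (j - F (gm n F j)) (by omega) h1 c' L'' hdecj'
      rw [← hIH, Option.some.inj hA]
end

def Sh (k : ℕ) (F : ℕ → ℕ) (L : List ℕ) : ℕ := (L.map fun c => F (k + c)).sum

section
variable {n k : ℕ} {F : ℕ → ℕ}

lemma Dlem (hn : 3 ≤ n) (hk : n ≤ k) (hF1 : ∀ i, 1 ≤ i → i ≤ n → F i = 1)
    (hFrec : ∀ m, n ≤ m → F (m + 1) = F m + F (m + 1 - n)) :
    ∀ m, n ≤ m → F (k + m) = Sh k F (dec n F (F m - 1)) + F (k + ((m - 1) % n + 1)) := by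
  intro m
  induction m using Nat.strong_induction_on with
  | _ m ih =>
    intro hm
    rcases eq_or_lt_of_le hm with heq | hgt
    · rw [← heq, hF1 n (by omega) le_rfl]
      rw [show (1:ℕ) - 1 = 0 from rfl, show dec n F 0 = [] from by simp [dec]]
      rw [show (n - 1) % n + 1 = n from by rw [Nat.mod_eq_of_lt (by omega)]; omega]
      simp [Sh]
    · rcases le_or_gt m (2*n) with hle | hlt2
      · -- n < m ≤ 2n
        have hFm : F m = m - n + 1 := by
          have := Flin hn hF1 hFrec (m - n) (by omega)
          rw [show n + (m - n) = m by omega] at this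
          exact this
        have hFm1 : F (m - 1) = m - n := by
          have := Flin hn hF1 hFrec (m - 1 - n) (by omega)
          rw [show n + (m - 1 - n) = m - 1 by omega] at this
          omega
        have hdd : dec n F (F m - 1) = [m - 1] := by
          rw [hFm, show m - n + 1 - 1 = m - n by omega]
          refine (dec_unique hn hF1 hFrec (m - n) [m-1] ?_).symm
          refine ⟨by intro c hc; simp at hc; omega, List.isChain_singleton _, ?_⟩
          simp [hFm1]
        rw [hdd]
        have hSh : Sh k F [m - 1] = F (k + (m - 1)) := by simp [Sh]
        rw [hSh]
        have hrec : F (k + m) = F (k + (m - 1)) + F (k + m - n) := by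
          have := hFrec (k + m - 1) (by omega)
          rw [show k + m - 1 + 1 - n = k + m - n by omega,
            show k + m - 1 + 1 = k + m by omega,
            show k + m - 1 = k + (m - 1) by omega] at this
          exact this
        have hmod : (m - 1) % n = m - 1 - n := by
          rw [Nat.mod_eq_sub_mod (by omega), Nat.mod_eq_of_lt (by omega)]
        rw [hmod, hrec, show k + (m - 1 - n + 1) = k + m - n by omega]
      · -- m > 2n
        have hrecm : F m = F (m - 1) + F (m - n) := by
          have := hFrec (m - 1) (by omega)
          rw [show m - 1 + 1 - n = m - n by omega, show m - 1 + 1 = m by omega] at this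
          exact this
        have hF2 : 2 ≤ F (m - n) := by
          have h1 : F (n + 1) = 2 := by
            have := Flin hn hF1 hFrec 1 (by omega); simpa using this
          have h2 := Fmono hn hF1 hFrec (n + 1) (m - n) (by omega) (by omega)
          omega
        have hx1 : 1 ≤ F (m - n) - 1 := by omega
        obtain ⟨⟨helem, hchain, hsum⟩, hlast⟩ := dec_spec hn hF1 hFrec (F (m - n) - 1)
        have hglast := hlast hx1
        have hgn : n ≤ gm n F (F (m - n) - 1) := gm_ge hn hF1 hx1
        have hgle : F (gm n F (F (m - n) - 1)) ≤ F (m - n) - 1 := gm_le hn hF1 hx1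
        have hgsmall : gm n F (F (m - n) - 1) + n ≤ m - 1 := by
          by_contra hcon
          have := Fmono hn hF1 hFrec (m - n) (gm n F (F (m - n) - 1)) (by omega) (by omega)
          omega
        have hdd : dec n F (F m - 1) = dec n F (F (m - n) - 1) ++ [m - 1] := by
          refine (dec_unique hn hF1 hFrec (F m - 1) _ ?_).symm
          refine ⟨?_, ?_, ?_⟩
          · intro c hc
            rcases List.mem_append.1 hc with h | h
            · exact helem c h
            · simp at h; omega
          · simp only [List.Chain']; rw [List.isChain_append]
            refine ⟨hchain, List.isChain_singleton _, ?_⟩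
            intro a ha b hb
            simp at hb; subst hb
            rw [hglast] at ha
            simp at ha; omega
          · simp only [List.map_append, List.sum_append, List.map_cons, List.map_nil,
              List.sum_cons, List.sum_nil, hsum]
            omega
        rw [hdd]
        have hSh : Sh k F (dec n F (F (m - n) - 1) ++ [m - 1]) =
            Sh k F (dec n F (F (m - n) - 1)) + F (k + (m - 1)) := by
          simp [Sh]
        rw [hSh]
        have hIH := ih (m - n) (by omega) (by omega)
        have hrec : F (k + m) = F (k + (m - 1)) + F (k + (m - n)) := by
          have := hFrec (k + m - 1) (by omega)
          rw [show k + m - 1 + 1 - n = k + (m - n) by omega,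
            show k + m - 1 + 1 = k + m by omega,
            show k + m - 1 = k + (m - 1) by omega] at this
          exact this
        have hmod : (m - n - 1) % n = (m - 1) % n := by
          rw [Nat.mod_eq_sub_mod (a := m - 1) (by omega), show m - 1 - n = m - n - 1 by omega]
        rw [hmod] at hIH
        omega

lemma gap_lem (hn : 3 ≤ n) (hk : n ≤ k) (hF1 : ∀ i, 1 ≤ i → i ≤ n → F i = 1)
    (hFrec : ∀ m, n ≤ m → F (m + 1) = F m + F (m + 1 - n)) :
    ∀ j, 1 ≤ j → ∀ c L', dec n F j = c :: L' →
      Sh k F (dec n F j) = Sh k F (dec n F (j - 1)) + F (k + ((c - 1) % n + 1)) := by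
  intro j
  induction j using Nat.strong_induction_on with
  | _ j ih =>
    intro hj c L' hdecj
    have hmn : n ≤ gm n F j := gm_ge hn hF1 hj
    have hFm_le : F (gm n F j) ≤ j := gm_le hn hF1 hj
    have hFm_pos : 1 ≤ F (gm n F j) := Fpos hn hF1 hFrec _ (by omega)
    have hlt : j < F (gm n F j + 1) := gm_lt hn hF1 hFrec hj
    have hrec : F (gm n F j + 1) = F (gm n F j) + F (gm n F j + 1 - n) := hFrec _ hmn
    have hdec : dec n F j = dec n F (j - F (gm n F j)) ++ [gm n F j] :=
      dec_eq hn hF1 hFrec hj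
    rcases Nat.eq_zero_or_pos (j - F (gm n F j)) with h0 | h1
    · have hj_eq : j = F (gm n F j) := by omega
      have hdec' : dec n F j = [gm n F j] := by
        rw [hdec, h0, show dec n F 0 = [] from by simp [dec]]; rfl
      rw [hdec'] at hdecj
      injection hdecj.symm with hc1 hc2
      subst hc1; subst hc2
      rw [hdec']
      have hD := Dlem hn hk hF1 hFrec (gm n F j) hmn
      rw [show Sh k F [gm n F j] = F (k + gm n F j) from by simp [Sh],
        show j - 1 = F (gm n F j) - 1 by omega]
      exact hD
    · obtain ⟨c', L'', hdecj'⟩ : ∃ c' L'', dec n F (j - F (gm n F j)) = c' :: L'' := by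
        have := (dec_spec hn hF1 hFrec (j - F (gm n F j))).2 h1
        cases hdd : dec n F (j - F (gm n F j)) with
        | nil => rw [hdd] at this; simp at this
        | cons a l => exact ⟨a, l, rfl⟩
      have hcc : c' = c := by
        rw [hdec, hdecj'] at hdecj
        injection hdecj.symm with hc1 _
        exact hc1.symm
      subst hcc
      have hdecm1 : dec n F (j - 1) = dec n F (j - F (gm n F j) - 1) ++ [gm n F j] := by
        obtain ⟨⟨helem, hchain, hsum⟩, hlast⟩ := dec_spec hn hF1 hFrec (j - F (gm n F j) - 1)
        refine (dec_unique hn hF1 hFrec (j - 1) _ ?_).symm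
        refine ⟨?_, ?_, ?_⟩
        · intro cc hcc
          rcases List.mem_append.1 hcc with h | h
          · exact helem cc h
          · simp at h; omega
        · simp only [List.Chain']; rw [List.isChain_append]
          refine ⟨hchain, List.isChain_singleton _, ?_⟩
          intro a ha b hb
          simp at hb; subst hb
          rcases Nat.eq_zero_or_pos (j - F (gm n F j) - 1) with hz | hz
          · rw [hz, show dec n F 0 = [] from by simp [dec]] at ha; simp at ha
          · rw [hlast hz] at ha
            simp at ha
            have hgle2 : F (gm n F (j - F (gm n F j) - 1)) ≤ j - F (gm n F j) - 1 :=
              gm_le hn hF1 hz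
            have hgn2 : n ≤ gm n F (j - F (gm n F j) - 1) := gm_ge hn hF1 hz
            subst ha
            by_contra hcon
            have := Fmono hn hF1 hFrec (gm n F j + 1 - n) (gm n F (j - F (gm n F j) - 1))
              (by omega) (by omega)
            omega
        · simp only [List.map_append, List.sum_append, List.map_cons, List.map_nil,
            List.sum_cons, List.sum_nil, hsum]
          omega
      have hIH := ih (j - F (gm n F j)) (by omega) h1 c' L'' hdecj'
      rw [show j - F (gm n F j) - 1 = j - F (gm n F j) - 1 from rfl] at hdecm1
      rw [hdec, hdecm1]
      have hShA : ∀ A : List ℕ, Sh k F (A ++ [gm n F j]) = Sh k F A + F (k + gm n F j) := by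
        intro A; simp [Sh]
      rw [hShA, hShA]
      rw [show j - F (gm n F j) - 1 = j - 1 - F (gm n F j) by omega] at hdecm1
      omega
end

def Aq (n k : ℕ) (F : ℕ → ℕ) (j : ℕ) : ℕ := F k + Sh k F (dec n F (j - 1))

section
variable {n k : ℕ} {F : ℕ → ℕ}

lemma dec_ne (hn : 3 ≤ n) (hF1 : ∀ i, 1 ≤ i → i ≤ n → F i = 1)
    (hFrec : ∀ m, n ≤ m → F (m + 1) = F m + F (m + 1 - n))
    {j : ℕ} (hj : 1 ≤ j) : ∃ c L', dec n F j = c :: L' := by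
  have := (dec_spec hn hF1 hFrec j).2 hj
  cases hdd : dec n F j with
  | nil => rw [hdd] at this; simp at this
  | cons a l => exact ⟨a, l, rfl⟩

lemma Aq_step (hn : 3 ≤ n) (hk : n ≤ k) (hF1 : ∀ i, 1 ≤ i → i ≤ n → F i = 1)
    (hFrec : ∀ m, n ≤ m → F (m + 1) = F m + F (m + 1 - n))
    {j c : ℕ} {L' : List ℕ} (hj : 1 ≤ j) (hdc : dec n F j = c :: L') :
    Aq n k F (j + 1) = Aq n k F j + F (k + ((c - 1) % n + 1)) := by
  have := gap_lem hn hk hF1 hFrec j hj c L' hdc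
  unfold Aq
  rw [show j + 1 - 1 = j from rfl]
  omega

lemma Aq_lt (hn : 3 ≤ n) (hk : n ≤ k) (hF1 : ∀ i, 1 ≤ i → i ≤ n → F i = 1)
    (hFrec : ∀ m, n ≤ m → F (m + 1) = F m + F (m + 1 - n))
    {a b : ℕ} (ha : 1 ≤ a) (hab : a < b) : Aq n k F a < Aq n k F b := by
  induction b, hab using Nat.le_induction with
  | base =>
    obtain ⟨c, L', hdc⟩ := dec_ne hn hF1 hFrec ha
    have hs := Aq_step hn hk hF1 hFrec ha hdc
    have : 1 ≤ F (k + ((c - 1) % n + 1)) := Fpos hn hF1 hFrec _ (by omega)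
    show Aq n k F a < Aq n k F (a + 1)
    omega
  | succ b hb ih =>
    obtain ⟨c, L', hdc⟩ := dec_ne hn hF1 hFrec (show 1 ≤ b by omega)
    have hs := Aq_step hn hk hF1 hFrec (show 1 ≤ b by omega) hdc
    have : 1 ≤ F (k + ((c - 1) % n + 1)) := Fpos hn hF1 hFrec _ (by omega)
    omega

lemma Aq_mem (hn : 3 ≤ n) (hk : n ≤ k) (hF1 : ∀ i, 1 ≤ i → i ≤ n → F i = 1)
    (hFrec : ∀ m, n ≤ m → F (m + 1) = F m + F (m + 1 - n))
    {j : ℕ} (hj : 1 ≤ j) : MemXnk n k F (Aq n k F j) := by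
  obtain ⟨⟨helem, hchain, hsum⟩, -⟩ := dec_spec hn hF1 hFrec (j - 1)
  have hFk : 1 ≤ F k := Fpos hn hF1 hFrec k (by omega)
  refine ⟨by unfold Aq; omega, k :: (dec n F (j-1)).map (fun c => k + c), ⟨?_, ?_, ?_⟩, ?_, ?_⟩
  · intro c hc
    rcases List.mem_cons.1 hc with rfl | hc
    · omega
    · obtain ⟨a, ha, rfl⟩ := List.mem_map.1 hc
      omega
  · simp only [List.Chain']; rw [List.isChain_cons]
    constructor
    · intro y hy
      cases hdd : dec n F (j - 1) with
      | nil => rw [hdd] at hy; simp at hy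
      | cons a l =>
        rw [hdd] at hy; simp at hy
        have := helem a (by rw [hdd]; simp)
        omega
    · rw [List.isChain_map]
      refine hchain.imp ?_
      intro a b hab; omega
  · simp only [List.map_cons, List.sum_cons, List.map_map]
    unfold Aq Sh
    rfl
  · exact List.mem_cons_self
  · intro c hc
    rcases List.mem_cons.1 hc with rfl | hc
    · exact le_rfl
    · obtain ⟨a, ha, rfl⟩ := List.mem_map.1 hc
      omega

lemma chain_sub (hn : 3 ≤ n) :
    ∀ t : List ℕ, (∀ c ∈ t, k ≤ c) → t.Chain' (fun a b => a + n ≤ b) →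
      (t.map (fun c => c - k)).Chain' (fun a b => a + n ≤ b) := by
  intro t
  induction t with
  | nil => simp
  | cons a t ih =>
    intro hb hc
    rw [List.map_cons]
    cases t with
    | nil => simp; exact List.isChain_singleton _
    | cons b t' =>
      rw [List.map_cons] at *
      simp only [List.Chain'] at hc ⊢; rw [List.isChain_cons_cons] at hc ⊢
      refine ⟨?_, ?_⟩
      · have hak := hb a (by simp)
        have hbk := hb b (by simp)
        have := hc.1
        omega
      · exact ih (fun c hc' => hb c (by simp at hc' ⊢; tauto)) hc.2

lemma Aq_surj (hn : 3 ≤ n) (hk : n ≤ k) (hF1 : ∀ i, 1 ≤ i → i ≤ n → F i = 1)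
    (hFrec : ∀ m, n ≤ m → F (m + 1) = F m + F (m + 1 - n))
    {x : ℕ} (hx : MemXnk n k F x) : ∃ j, 1 ≤ j ∧ Aq n k F j = x := by
  obtain ⟨hxpos, L, ⟨helem, hchain, hsum⟩, hkL, hbound⟩ := hx
  haveI : IsTrans ℕ (fun a b => a + n ≤ b) := ⟨fun a b c hab hbc => by omega⟩
  have hpw := List.isChain_iff_pairwise.1 hchain
  cases L with
  | nil => simp at hkL
  | cons h t =>
    obtain rfl : k = h := by
      have h1 : k ≤ h := hbound h (by simp)
      rcases List.mem_cons.1 hkL with h2 | hkt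
      · exact h2
      · have := (List.pairwise_cons.1 hpw).1 k hkt
        omega
    have htb : ∀ c ∈ t, k + n ≤ c := (List.pairwise_cons.1 hpw).1
    set T' := t.map (fun c => c - k) with hT'
    set j₀ := (T'.map F).sum with hj₀
    have hdecT : IsDecompOf n F T' j₀ := by
      refine ⟨?_, ?_, rfl⟩
      · intro c hc
        obtain ⟨a, ha, rfl⟩ := List.mem_map.1 hc
        have := htb a ha
        omega
      · exact chain_sub hn t (fun c hc => by have := htb c hc; omega) hchain.tail
    have hT'd : T' = dec n F j₀ := dec_unique hn hF1 hFrec j₀ T' hdecT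
    have hShT : Sh k F T' = (t.map F).sum := by
      unfold Sh
      rw [hT', List.map_map]
      refine congrArg List.sum (List.map_congr_left ?_)
      intro a ha
      have := htb a ha
      simp only [Function.comp_apply]
      congr 1
      omega
    refine ⟨j₀ + 1, by omega, ?_⟩
    unfold Aq
    rw [show j₀ + 1 - 1 = j₀ from rfl, ← hT'd, hShT]
    simp only [List.map_cons, List.sum_cons] at hsum
    omega

lemma q_eq (hn : 3 ≤ n) (hk : n ≤ k) (hF1 : ∀ i, 1 ≤ i → i ≤ n → F i = 1)
    (hFrec : ∀ m, n ≤ m → F (m + 1) = F m + F (m + 1 - n)) (q : ℕ → ℕ)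
    (hq_mem : ∀ r, 1 ≤ r → MemXnk n k F (q r))
    (hq_mono : ∀ r, 1 ≤ r → q r < q (r + 1))
    (hq_surj : ∀ x, MemXnk n k F x → ∃ r, 1 ≤ r ∧ q r = x) :
    ∀ r, 1 ≤ r → q r = Aq n k F r := by
  have qmono : ∀ a b, 1 ≤ a → a ≤ b → q a ≤ q b := by
    intro a b ha hab
    induction b, hab using Nat.le_induction with
    | base => exact le_rfl
    | succ b hb ih => have := hq_mono b (by omega); omega
  have qlt : ∀ a b, 1 ≤ a → a < b → q a < q b := by
    intro a b ha hab
    have h1 := hq_mono a ha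
    have h2 := qmono (a+1) b (by omega) (by omega)
    omega
  have Amono : ∀ a b, 1 ≤ a → a ≤ b → Aq n k F a ≤ Aq n k F b := by
    intro a b ha hab
    rcases eq_or_lt_of_le hab with rfl | h
    · exact le_rfl
    · exact (Aq_lt hn hk hF1 hFrec ha h).le
  intro r
  induction r using Nat.strong_induction_on with
  | _ r ih =>
    intro hr
    obtain ⟨s, hs1, hqs⟩ := hq_surj (Aq n k F r) (Aq_mem hn hk hF1 hFrec hr)
    obtain ⟨u, hu1, hAu⟩ := Aq_surj hn hk hF1 hFrec (hq_mem r hr)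
    have hsr : r ≤ s := by
      by_contra hcon
      have h5 := ih s (by omega) hs1
      have h6 := Aq_lt hn hk hF1 hFrec hs1 (show s < r by omega)
      omega
    have hur : r ≤ u := by
      by_contra hcon
      have h1 := ih u (by omega) hu1
      have h2 := qlt u r hu1 (by omega)
      omega
    have h3 : q r ≤ q s := qmono r s hr hsr
    have h4 : Aq n k F r ≤ Aq n k F u := Amono r u hr hur
    omega

end


/-- Let `k ≥ n ≥ 3` and `j ≥ 1`, let `W = S_∞` be the infinite `n`-string
(1-indexed: the `j`-th letter is `W (j-1)`), and let `q 1 < q 2 < ⋯` enumerate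
the positive integers whose `n`-decomposition has `F k` as smallest summand.
If the `j`-th letter of `S_∞` is `a_i` (with `1 ≤ i ≤ n`), then
`q (j+1) - q j = F (k+i)`. -/
theorem gap_of_q_given_letter (n k : ℕ) (hn : 3 ≤ n) (hk : n ≤ k)
    (F : ℕ → ℕ)
    (hF1 : ∀ i, 1 ≤ i → i ≤ n → F i = 1)
    (hFrec : ∀ m, n ≤ m → F (m + 1) = F m + F (m + 1 - n))
    (S : ℕ → List ℕ)
    (hS1 : ∀ i, 1 ≤ i → i ≤ n → S i = [i])
    (hSrec : ∀ m, n ≤ m → S (m + 1) = S m ++ S (m + 1 - n))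
    (W : ℕ → ℕ)
    (hW : ∀ m, n ≤ m → S m = (List.range (S m).length).map W)
    (q : ℕ → ℕ)
    (hq_mem : ∀ r, 1 ≤ r → MemXnk n k F (q r))
    (hq_mono : ∀ r, 1 ≤ r → q r < q (r + 1))
    (hq_surj : ∀ x, MemXnk n k F x → ∃ r, 1 ≤ r ∧ q r = x)
    (j i : ℕ) (hj : 1 ≤ j) (hi1 : 1 ≤ i) (hi2 : i ≤ n)
    (hletter : W (j - 1) = i) :
    q (j + 1) = q j + F (k + i) := by
  obtain ⟨c, L', hdc⟩ := dec_ne hn hF1 hFrec hj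
  have hlet := letter_eq hn hF1 hFrec hS1 hSrec hW j hj c L' hdc
  have hi : i = (c - 1) % n + 1 := by rw [← hletter]; exact hlet
  have h1 := q_eq hn hk hF1 hFrec q hq_mem hq_mono hq_surj (j+1) (by omega)
  have h2 := q_eq hn hk hF1 hFrec q hq_mem hq_mono hq_surj j hj
  have h3 := Aq_step hn hk hF1 hFrec hj hdc
  rw [h1, h2, hi]
  exact h3
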